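/- If an A_τ-labelled transition system T is boundedly branching and has no divergence up to ≈Δ, then T is boundedly branching up to ≈Δ. -/

import Mathlib

set_option autoImplicit false

universe u v w x

/-! ### Labelled transition systems.
`A` is the set of observable actions; labels are `Option A`, with `none` playing
the role of the unobservable action τ. -/

structure LTS (A : Type u) where
  /-- the set of states -/
  S : Type v
  /-- the labelled transition relation; `step s a t` means s →a t (with `a = none` for τ) -/
  step : S → Option A → S → Prop
  /-- the initial state ↑ -/
  init : S

namespace LTS

variable {A : Type u}

/-- a τ-step -/
def TauStep (T : LTS.{u, v} A) (s t : T.S) : Prop := T.step s none t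

/-- `→*` : the reflexive-transitive closure of →τ -/
def TauStar (T : LTS.{u, v} A) : T.S → T.S → Prop := Relation.ReflTransGen T.TauStep

/-- `→+` : the transitive closure of →τ -/
def TauPlus (T : LTS.{u, v} A) : T.S → T.S → Prop := Relation.TransGen T.TauStep

/-- `s →(a) t` : either `s →a t`, or `a = τ` and `s = t` -/
def OptStep (T : LTS.{u, v} A) (s : T.S) (a : Option A) (t : T.S) : Prop :=
  T.step s a t ∨ (a = none ∧ s = t)

/-- reachability from the initial state -/
def Reachable (T : LTS.{u, v} A) (s : T.S) : Prop :=
  Relation.ReflTransGen (fun p q => ∃ a, T.step p a q) T.init s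

/-- `T` is boundedly branching: there is `B : ℕ` with `|out(s)| ≤ B` for every state `s`,
where `out(s) = {(a,t) | s →a t}`. -/
def BoundedBranching (T : LTS.{u, v} A) : Prop :=
  ∃ B : ℕ, ∀ s : T.S, Cardinal.mk {p : Option A × T.S // T.step s p.1 p.2} ≤ (B : Cardinal)

end LTS

/-- `R` is a branching bisimulation from `T1` to `T2`. -/
def IsBranchingBisim {A : Type u} (T1 : LTS.{u, v} A) (T2 : LTS.{u, w} A)
    (R : T1.S → T2.S → Prop) : Prop :=
  ∀ s1 s2, R s1 s2 →
    (∀ a s1', T1.step s1 a s1' →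
      ∃ s2'' s2', T2.TauStar s2 s2'' ∧ T2.OptStep s2'' a s2' ∧ R s1 s2'' ∧ R s1' s2') ∧
    (∀ a s2', T2.step s2 a s2' →
      ∃ s1'' s1', T1.TauStar s1 s1'' ∧ T1.OptStep s1'' a s1' ∧ R s1'' s2 ∧ R s1' s2')

/-- `R` is divergence-preserving. -/
def IsDivPres {A : Type u} (T1 : LTS.{u, v} A) (T2 : LTS.{u, w} A)
    (R : T1.S → T2.S → Prop) : Prop :=
  (∀ (f : ℕ → T1.S) (s2 : T2.S),
      (∀ i, T1.TauStep (f i) (f (i + 1))) → (∀ i, R (f i) s2) →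
      ∃ s2', T2.TauPlus s2 s2' ∧ ∃ i, R (f i) s2') ∧
  (∀ (s1 : T1.S) (g : ℕ → T2.S),
      (∀ i, T2.TauStep (g i) (g (i + 1))) → (∀ i, R s1 (g i)) →
      ∃ s1', T1.TauPlus s1 s1' ∧ ∃ i, R s1' (g i))

/-- `T1 ≈b T2` -/
def BranchingBisimilar {A : Type u} (T1 : LTS.{u, v} A) (T2 : LTS.{u, w} A) : Prop :=
  ∃ R, IsBranchingBisim T1 T2 R ∧ R T1.init T2.init

/-- `T1 ≈Δ T2` -/
def BranchingBisimilarD {A : Type u} (T1 : LTS.{u, v} A) (T2 : LTS.{u, w} A) : Prop :=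
  ∃ R, IsBranchingBisim T1 T2 R ∧ IsDivPres T1 T2 R ∧ R T1.init T2.init

/-- `s1 ≈b s2` for states -/
def SBisim {A : Type u} (T1 : LTS.{u, v} A) (T2 : LTS.{u, w} A) (s1 : T1.S) (s2 : T2.S) : Prop :=
  ∃ R, IsBranchingBisim T1 T2 R ∧ R s1 s2

/-- `s1 ≈Δ s2` for states -/
def SBisimD {A : Type u} (T1 : LTS.{u, v} A) (T2 : LTS.{u, w} A) (s1 : T1.S) (s2 : T2.S) : Prop :=
  ∃ R, IsBranchingBisim T1 T2 R ∧ IsDivPres T1 T2 R ∧ R s1 s2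

/-- `R` is a bisimulation up to ≈b from `T1` to `T2`. -/
def IsBisimUpTo {A : Type u} (T1 : LTS.{u, v} A) (T2 : LTS.{u, w} A)
    (R : T1.S → T2.S → Prop) : Prop :=
  ∀ s1 s2, R s1 s2 →
    (∀ a s1'' s1', T1.TauStar s1 s1'' → T1.step s1'' a s1' →
        SBisim T1 T1 s1 s1'' → (a ≠ none ∨ ¬ SBisim T1 T1 s1'' s1') →
        ∃ s2', T2.step s2 a s2' ∧
          (∃ u, SBisim T1 T1 s1'' u ∧ R u s2) ∧
          (∃ u, SBisim T1 T1 s1' u ∧ R u s2')) ∧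
    (∀ a s2', T2.step s2 a s2' →
        ∃ s1'' s1', T1.TauStar s1 s1'' ∧ T1.step s1'' a s1' ∧ SBisim T1 T1 s1'' s1 ∧
          (∃ u, SBisim T1 T1 s1' u ∧ R u s2'))

/-- the ≈Δ-equivalence class of a state -/
def eqClassD {A : Type u} (T : LTS.{u, v} A) (s : T.S) : Set T.S := {t | SBisimD T T s t}

/-- the branching degree of a state up to ≈Δ :
the cardinality of `{ (a, [s']_{≈Δ}) | ∃ s''. s →* s'' →a s', s ≈Δ s'', (a = τ ⇒ s'' ≉Δ s') }`. -/
def degD {A : Type u} (T : LTS.{u, v} A) (s : T.S) : Cardinal :=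
  Cardinal.mk {p : Option A × Set T.S //
    ∃ s'' s', T.TauStar s s'' ∧ T.step s'' p.1 s' ∧ SBisimD T T s s'' ∧
      (p.1 = none → ¬ SBisimD T T s'' s') ∧ p.2 = eqClassD T s'}

/-- `T` has a divergence up to ≈Δ : an infinite τ-sequence of reachable,
mutually ≈Δ-equivalent states. -/
def HasDivergenceD {A : Type u} (T : LTS.{u, v} A) : Prop :=
  ∃ f : ℕ → T.S, (∀ i, T.Reachable (f i)) ∧ (∀ i, T.TauStep (f i) (f (i + 1))) ∧
    ∀ i j, SBisimD T T (f i) (f j)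

/-- `T` is boundedly branching up to ≈Δ (over the reachable states). -/
def BoundedBranchingUpToD {A : Type u} (T : LTS.{u, v} A) : Prop :=
  ∃ B : ℕ, ∀ s, T.Reachable s → degD T s ≤ (B : Cardinal)

/-! ### (Generalized) reactive Turing machines.
Tape symbols are `Option D` with `none` the blank `□`; actions are `Option A` with
`none` the unobservable action τ.  A configuration `(s, (l, d, r))` consists of the
control state `s`, the (reversed) tape content `l` to the left of the head, the symbol
`d` under the head, and the tape content `r` to the right of the head; this represents
the tape instance δL ď δR with δL = reverse of l and δR = r.  The boolean in a rule
is the move direction: `false` = L, `true` = R. -/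

/-- generalized reactive Turing machines: possibly infinitely many control states,
tape symbols and transition rules. -/
structure GRTM (A : Type u) where
  /-- control states -/
  Q : Type
  /-- data symbols (the tape alphabet is `Option D`, `none` being the blank □) -/
  D : Type
  /-- transition rules `(s, d, a, e, mv, t)`, i.e. s →a[d/e]mv t -/
  rules : Set (Q × Option D × Option A × Option D × Bool × Q)
  /-- the initial control state -/
  init : Q

namespace GRTM

variable {A : Type u}

/-- configurations -/
abbrev Conf (M : GRTM A) : Type :=
  M.Q × List (Option M.D) × Option M.D × List (Option M.D)

/-- the transition system `T(M)` associated with `M` -/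
def lts (M : GRTM A) : LTS.{u, 0} A where
  S := M.Conf
  init := (M.init, [], none, [])
  step := fun c a c' => ∃ e t,
    ((c.1, c.2.2.1, a, e, false, t) ∈ M.rules ∧
      c' = (t, c.2.1.tail, c.2.1.headD none, e :: c.2.2.2)) ∨
    ((c.1, c.2.2.1, a, e, true, t) ∈ M.rules ∧
      c' = (t, e :: c.2.1, c.2.2.2.headD none, c.2.2.2.tail))

end GRTM

/-- reactive Turing machines: finitely many control states, data symbols and rules. -/
structure RTM (A : Type u) where
  /-- control states -/
  Q : Type
  /-- data symbols -/
  D : Type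
  finQ : Finite Q
  finD : Finite D
  /-- transition rules `(s, d, a, e, mv, t)`, i.e. s →a[d/e]mv t -/
  rules : Set (Q × Option D × Option A × Option D × Bool × Q)
  finRules : rules.Finite
  /-- the initial control state -/
  init : Q

namespace RTM

variable {A : Type u}

/-- configurations -/
abbrev Conf (M : RTM A) : Type :=
  M.Q × List (Option M.D) × Option M.D × List (Option M.D)

/-- the transition system `T(M)` associated with `M` -/
def lts (M : RTM A) : LTS.{u, 0} A where
  S := M.Conf
  init := (M.init, [], none, [])
  step := fun c a c' => ∃ e t,
    ((c.1, c.2.2.1, a, e, false, t) ∈ M.rules ∧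
      c' = (t, c.2.1.tail, c.2.1.headD none, e :: c.2.2.2)) ∨
    ((c.1, c.2.2.1, a, e, true, t) ∈ M.rules ∧
      c' = (t, e :: c.2.1, c.2.2.2.headD none, c.2.2.2.tail))

end RTM

/-! ### Auxiliary development -/

section Aux

variable {A : Type u} {T : LTS.{u, v} A}

/-- a divergence-preserving branching bisimulation on `T` -/
def Dpbb (T : LTS.{u, v} A) (R : T.S → T.S → Prop) : Prop :=
  IsBranchingBisim T T R ∧ IsDivPres T T R

lemma sbisimD_iff {x y : T.S} : SBisimD T T x y ↔ ∃ R, Dpbb T R ∧ R x y := by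
  constructor
  · rintro ⟨R, h1, h2, h3⟩; exact ⟨R, ⟨h1, h2⟩, h3⟩
  · rintro ⟨R, ⟨h1, h2⟩, h3⟩; exact ⟨R, h1, h2, h3⟩

lemma eqv_refl (x : T.S) : SBisimD T T x x := by
  refine ⟨Eq, ?_, ?_, rfl⟩
  · intro s1 s2 h
    subst h
    constructor
    · intro a s1' hs
      exact ⟨s1, s1', Relation.ReflTransGen.refl, Or.inl hs, rfl, rfl⟩
    · intro a s2' hs
      exact ⟨s1, s2', Relation.ReflTransGen.refl, Or.inl hs, rfl, rfl⟩
  · constructor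
    · intro f s2 hstep hrel
      refine ⟨s2, ?_, 0, hrel 0⟩
      have h0 := hstep 0
      rw [hrel 0, hrel 1] at h0
      exact Relation.TransGen.single h0
    · intro s1 g hstep hrel
      refine ⟨s1, ?_, 0, hrel 0⟩
      have h0 := hstep 0
      rw [← hrel 0, ← hrel 1] at h0
      exact Relation.TransGen.single h0

lemma dpbb_flip {R : T.S → T.S → Prop} (h : Dpbb T R) : Dpbb T (flip R) := by
  obtain ⟨hb, hd1, hd2⟩ := h
  refine ⟨?_, ?_, ?_⟩
  · intro s1 s2 hr
    obtain ⟨c1, c2⟩ := hb s2 s1 hr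
    exact ⟨c2, c1⟩
  · intro f s2 hstep hrel
    obtain ⟨s2', h1, i, h2⟩ := hd2 s2 f hstep hrel
    exact ⟨s2', h1, i, h2⟩
  · intro s1 g hstep hrel
    obtain ⟨s1', h1, i, h2⟩ := hd1 g s1 hstep hrel
    exact ⟨s1', h1, i, h2⟩

lemma eqv_symm {x y : T.S} (h : SBisimD T T x y) : SBisimD T T y x := by
  rw [sbisimD_iff] at h ⊢
  obtain ⟨R, hR, hxy⟩ := h
  exact ⟨flip R, dpbb_flip hR, hxy⟩

/-- matching a single transition through `≈Δ` -/
lemma eqv_match {s1 s2 : T.S} (h : SBisimD T T s1 s2) {a : Option A} {s1' : T.S}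
    (hs : T.step s1 a s1') :
    ∃ s2'' s2', T.TauStar s2 s2'' ∧ T.OptStep s2'' a s2' ∧
      SBisimD T T s1 s2'' ∧ SBisimD T T s1' s2' := by
  rw [sbisimD_iff] at h
  obtain ⟨R, hR, hxy⟩ := h
  obtain ⟨s2'', s2', h1, h2, h3, h4⟩ := (hR.1 s1 s2 hxy).1 a s1' hs
  exact ⟨s2'', s2', h1, h2, sbisimD_iff.mpr ⟨R, hR, h3⟩, sbisimD_iff.mpr ⟨R, hR, h4⟩⟩

lemma eqv_match_rev {s1 s2 : T.S} (h : SBisimD T T s1 s2) {a : Option A} {s2' : T.S}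
    (hs : T.step s2 a s2') :
    ∃ s1'' s1', T.TauStar s1 s1'' ∧ T.OptStep s1'' a s1' ∧
      SBisimD T T s1'' s2 ∧ SBisimD T T s1' s2' := by
  rw [sbisimD_iff] at h
  obtain ⟨R, hR, hxy⟩ := h
  obtain ⟨s1'', s1', h1, h2, h3, h4⟩ := (hR.1 s1 s2 hxy).2 a s2' hs
  exact ⟨s1'', s1', h1, h2, sbisimD_iff.mpr ⟨R, hR, h3⟩, sbisimD_iff.mpr ⟨R, hR, h4⟩⟩

lemma optStep_tau {x y : T.S} (h : T.OptStep x none y) : T.TauStar x y := by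
  rcases h with h | ⟨_, rfl⟩
  · exact Relation.ReflTransGen.single h
  · exact Relation.ReflTransGen.refl

lemma tauStar_cases {x y : T.S} (h : T.TauStar x y) : x = y ∨ T.TauPlus x y := by
  rcases Relation.reflTransGen_iff_eq_or_transGen.mp h with h | h
  · exact Or.inl h.symm
  · exact Or.inr h

/-- transfer a `→*` path through `≈Δ` -/
lemma eqv_tauStar {x x' : T.S} (hp : T.TauStar x x') :
    ∀ y : T.S, SBisimD T T x y → ∃ y', T.TauStar y y' ∧ SBisimD T T x' y' := by
  induction hp using Relation.ReflTransGen.head_induction_on with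
  | refl => intro y hy; exact ⟨y, Relation.ReflTransGen.refl, hy⟩
  | head hstep htail ih =>
      intro y hy
      obtain ⟨y'', y1, h1, h2, _, h4⟩ := eqv_match hy hstep
      obtain ⟨y', h5, h6⟩ := ih y1 h4
      exact ⟨y', Relation.ReflTransGen.trans (Relation.ReflTransGen.trans h1 (optStep_tau h2)) h5, h6⟩

/-- divergence condition (3) holds for `≈Δ` itself -/
lemma eqv_div3 (f : ℕ → T.S) (s2 : T.S) (hstep : ∀ i, T.TauStep (f i) (f (i + 1)))
    (hrel : ∀ i, SBisimD T T (f i) s2) :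
    ∃ s2', T.TauPlus s2 s2' ∧ ∃ i, SBisimD T T (f i) s2' := by
  obtain ⟨R, hR, h0⟩ := sbisimD_iff.mp (hrel 0)
  by_cases hall : ∀ i, R (f i) s2
  · obtain ⟨s2', h1, i, h2⟩ := hR.2.1 f s2 hstep hall
    exact ⟨s2', h1, i, sbisimD_iff.mpr ⟨R, hR, h2⟩⟩
  · push_neg at hall
    have hex : ∃ i, ¬ R (f i) s2 := hall
    classical
    have hk : ¬ R (f (Nat.find hex)) s2 := Nat.find_spec hex
    have hkpos : Nat.find hex ≠ 0 := by
      intro h0'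
      exact hk (h0' ▸ h0)
    obtain ⟨k', hkk⟩ : ∃ k', Nat.find hex = k' + 1 :=
      ⟨Nat.find hex - 1, (Nat.succ_pred_eq_of_pos (Nat.pos_of_ne_zero hkpos)).symm⟩
    have hk' : R (f k') s2 := by
      by_contra hc
      have hle : Nat.find hex ≤ k' := Nat.find_le hc
      omega
    have hk2 : ¬ R (f (k' + 1)) s2 := hkk ▸ hk
    obtain ⟨s2'', s2', h1, h2, h3, h4⟩ := (hR.1 _ _ hk').1 none (f (k' + 1)) (hstep k')
    have hss : T.TauStar s2 s2' := Relation.ReflTransGen.trans h1 (optStep_tau h2)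
    rcases tauStar_cases hss with h | h
    · exact absurd (h ▸ h4) hk2
    · exact ⟨s2', h, k' + 1, sbisimD_iff.mpr ⟨R, hR, h4⟩⟩

/-- for a symmetric relation, one half of the conditions suffices -/
lemma dpbb_of_symm {R : T.S → T.S → Prop} (hsym : ∀ x y, R x y → R y x)
    (hc1 : ∀ s1 s2, R s1 s2 → ∀ a s1', T.step s1 a s1' →
      ∃ s2'' s2', T.TauStar s2 s2'' ∧ T.OptStep s2'' a s2' ∧ R s1 s2'' ∧ R s1' s2')
    (hc3 : ∀ (f : ℕ → T.S) (s2 : T.S), (∀ i, T.TauStep (f i) (f (i + 1))) →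
      (∀ i, R (f i) s2) → ∃ s2', T.TauPlus s2 s2' ∧ ∃ i, R (f i) s2') :
    Dpbb T R := by
  refine ⟨?_, ?_, ?_⟩
  · intro s1 s2 hr
    constructor
    · exact hc1 s1 s2 hr
    · intro a s2' hs
      obtain ⟨s1'', s1', h1, h2, h3, h4⟩ := hc1 s2 s1 (hsym _ _ hr) a s2' hs
      exact ⟨s1'', s1', h1, h2, hsym _ _ h3, hsym _ _ h4⟩
  · exact hc3
  · intro s1 g hstep hrel
    obtain ⟨s1', h1, i, h2⟩ := hc3 g s1 hstep (fun i => hsym _ _ (hrel i))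
    exact ⟨s1', h1, i, hsym _ _ h2⟩

/-- `≈Δ` is itself a divergence-preserving branching bisimulation -/
lemma eqv_dpbb : Dpbb T (SBisimD T T) :=
  dpbb_of_symm (fun _ _ h => eqv_symm h)
    (fun _ _ h _ _ hs => eqv_match h hs) eqv_div3

end Aux

section Aux2

variable {A : Type u} {T : LTS.{u, v} A}

lemma chain_getLast_tauStar :
    ∀ (l : List T.S) (c : T.S), List.Chain T.TauStep c l →
      T.TauStar c ((c :: l).getLast (List.cons_ne_nil c l))
  | [], c, _ => Relation.ReflTransGen.refl
  | x :: xs, c, h => by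
      replace h := List.chain_cons.mp h
      have := chain_getLast_tauStar xs x h.2
      rw [List.getLast_cons (List.cons_ne_nil x xs)]
      exact Relation.ReflTransGen.head h.1 this

lemma chain_of_tauPlus {c m' : T.S} (h : T.TauPlus c m') :
    ∃ (l : List T.S) (hne : l ≠ []), List.Chain T.TauStep c l ∧ l.getLast hne = m' := by
  induction h using Relation.TransGen.head_induction_on with
  | single h => exact ⟨[m'], List.cons_ne_nil _ _, List.chain_cons.mpr ⟨h, List.Chain.nil⟩, rfl⟩
  | head h _ ihp =>
      obtain ⟨l, hne, hchain, hlast⟩ := ihp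
      refine ⟨_ :: l, List.cons_ne_nil _ _, List.chain_cons.mpr ⟨h, hchain⟩, ?_⟩
      rw [List.getLast_cons hne]
      exact hlast

/-- transferring a chain through `≈Δ`: either every state on the chain is related to `s3`,
or `s3` can properly advance to a state related to the end of the chain. -/
lemma chain_transfer (s3 : T.S) :
    ∀ (l : List T.S) (c : T.S), List.Chain T.TauStep c l → SBisimD T T c s3 →
      (∀ x ∈ l, SBisimD T T x s3) ∨
      (∃ z, T.TauPlus s3 z ∧ SBisimD T T ((c :: l).getLast (List.cons_ne_nil c l)) z)
  | [], c, _, _ => Or.inl (by simp)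
  | x :: xs, c, hchain, hc => by
      replace hchain := List.chain_cons.mp hchain
      obtain ⟨z'', z', h1, h2, _, h4⟩ := eqv_match hc hchain.1
      have hss : T.TauStar s3 z' := Relation.ReflTransGen.trans h1 (optStep_tau h2)
      rcases tauStar_cases hss with heq | hplus
      · rcases chain_transfer s3 xs x hchain.2 (heq ▸ h4) with hall | ⟨z, hz, hlz⟩
        · left
          intro y hy
          rcases List.mem_cons.mp hy with rfl | hy
          · exact heq ▸ h4
          · exact hall y hy
        · right
          refine ⟨z, hz, ?_⟩
          rw [List.getLast_cons (List.cons_ne_nil x xs)]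
          exact hlz
      · right
        obtain ⟨z2, hz2, hlz2⟩ := eqv_tauStar (chain_getLast_tauStar xs x hchain.2) z' h4
        refine ⟨z2, Relation.TransGen.trans_left hplus hz2, ?_⟩
        rw [List.getLast_cons (List.cons_ne_nil x xs)]
        exact hlz2

/-- a run related to `c` can always advance `c` properly to a related state -/
lemma run_advance (f : ℕ → T.S) (c : T.S) (hstep : ∀ i, T.TauStep (f i) (f (i + 1)))
    (h0 : SBisimD T T (f 0) c) :
    ∃ c' k, T.TauPlus c c' ∧ SBisimD T T (f k) c' := by
  by_cases hall : ∀ i, SBisimD T T (f i) c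
  · obtain ⟨c', h1, k, h2⟩ := eqv_div3 f c hstep hall
    exact ⟨c', k, h1, h2⟩
  · push_neg at hall
    classical
    have hk : ¬ SBisimD T T (f (Nat.find hall)) c := Nat.find_spec hall
    have hkpos : Nat.find hall ≠ 0 := fun h0' => hk (h0' ▸ h0)
    obtain ⟨k', hkk⟩ : ∃ k', Nat.find hall = k' + 1 :=
      ⟨Nat.find hall - 1, (Nat.succ_pred_eq_of_pos (Nat.pos_of_ne_zero hkpos)).symm⟩
    have hk' : SBisimD T T (f k') c := by
      by_contra hc
      have hle : Nat.find hall ≤ k' := Nat.find_le hc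
      omega
    have hk2 : ¬ SBisimD T T (f (k' + 1)) c := hkk ▸ hk
    obtain ⟨c'', c', h1, h2, _, h4⟩ := eqv_match hk' (hstep k')
    have hss : T.TauStar c c' := Relation.ReflTransGen.trans h1 (optStep_tau h2)
    rcases tauStar_cases hss with heq | hplus
    · exact absurd (heq ▸ h4) hk2
    · exact ⟨c', k' + 1, hplus, h4⟩

/-- segment construction for the transitivity proof -/
lemma seg_construct (f : ℕ → T.S) (s3 : T.S) (hstep : ∀ i, T.TauStep (f i) (f (i + 1)))
    (hG : ¬ ∃ z, T.TauPlus s3 z ∧ ∃ i m, SBisimD T T (f i) m ∧ SBisimD T T m z)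
    (c : T.S) (i : ℕ) (hfc : SBisimD T T (f i) c) (hcs : SBisimD T T c s3) :
    ∃ (l : List T.S) (i' : ℕ) (hne : l ≠ []), List.Chain T.TauStep c l ∧
      (∀ x ∈ l, SBisimD T T x s3) ∧ SBisimD T T (f i') (l.getLast hne) := by
  have hstep' : ∀ k, T.TauStep (f (i + k)) (f (i + (k + 1))) := by
    intro k
    have := hstep (i + k)
    rw [← Nat.add_assoc]
    exact this
  have hfc0 : SBisimD T T (f (i + 0)) c := by rw [Nat.add_zero]; exact hfc
  obtain ⟨c', k1, hplus, hEq⟩ := run_advance (fun k => f (i + k)) c hstep' hfc0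
  obtain ⟨l, hne, hchain, hlast⟩ := chain_of_tauPlus hplus
  rcases chain_transfer s3 l c hchain hcs with hall | ⟨z, hz, hlz⟩
  · exact ⟨l, i + k1, hne, hchain, hall, hlast ▸ hEq⟩
  · exfalso
    apply hG
    refine ⟨z, hz, i + k1, (c :: l).getLast (List.cons_ne_nil c l), ?_, hlz⟩
    rw [List.getLast_cons hne, hlast]
    exact hEq

end Aux2

section Aux3

variable {A : Type u} {T : LTS.{u, v} A}

lemma eqv_trans {x y z : T.S} (hxy : SBisimD T T x y) (hyz : SBisimD T T y z) :
    SBisimD T T x z := by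
  classical
  set R : T.S → T.S → Prop := fun a c => ∃ b, SBisimD T T a b ∧ SBisimD T T b c with hR
  have hsym : ∀ a c, R a c → R c a := by
    rintro a c ⟨b, h1, h2⟩
    exact ⟨b, eqv_symm h2, eqv_symm h1⟩
  have hc1 : ∀ s1 s2, R s1 s2 → ∀ a s1', T.step s1 a s1' →
      ∃ s2'' s2', T.TauStar s2 s2'' ∧ T.OptStep s2'' a s2' ∧ R s1 s2'' ∧ R s1' s2' := by
    rintro s1 s2 ⟨m, h1, h2⟩ a s1' hs
    obtain ⟨m'', m', g1, g2, g3, g4⟩ := eqv_match h1 hs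
    obtain ⟨w, gw1, gw2⟩ := eqv_tauStar g1 s2 h2
    rcases g2 with gstep | ⟨ha, heq⟩
    · obtain ⟨w'', w', k1, k2, k3, k4⟩ := eqv_match gw2 gstep
      exact ⟨w'', w', Relation.ReflTransGen.trans gw1 k1, k2,
        ⟨m'', g3, k3⟩, ⟨m', g4, k4⟩⟩
    · subst heq
      exact ⟨w, w, gw1, Or.inr ⟨ha, rfl⟩, ⟨m'', g3, gw2⟩, ⟨m'', g4, gw2⟩⟩
  have hc3 : ∀ (f : ℕ → T.S) (s3 : T.S), (∀ i, T.TauStep (f i) (f (i + 1))) →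
      (∀ i, R (f i) s3) → ∃ s3', T.TauPlus s3 s3' ∧ ∃ i, R (f i) s3' := by
    intro f s3 hstep hrel
    by_contra hGoal
    have hG : ¬ ∃ z, T.TauPlus s3 z ∧ ∃ i m, SBisimD T T (f i) m ∧ SBisimD T T m z := by
      rintro ⟨z, hz, i, m, h1, h2⟩
      exact hGoal ⟨z, hz, i, m, h1, h2⟩
    obtain ⟨m0, hfm0, hm0s⟩ := hrel 0
    -- the machine states
    let Inv : T.S × List T.S × ℕ → Prop := fun p =>
      SBisimD T T p.1 s3 ∧ List.Chain T.TauStep p.1 p.2.1 ∧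
        (∀ x ∈ p.2.1, SBisimD T T x s3) ∧
        SBisimD T T (f p.2.2) ((p.1 :: p.2.1).getLast (List.cons_ne_nil _ _))
    have hstepSt : ∀ p, Inv p → ∃ q, Inv q ∧ T.TauStep p.1 q.1 ∧
        (p.2.1 ≠ [] → q.2.1.length < p.2.1.length ∧ q.2.2 = p.2.2) := by
      rintro ⟨c, l, i⟩ ⟨i1, i2, i3, i4⟩
      match l with
      | [] =>
        have hfc : SBisimD T T (f i) c := by simpa using i4
        obtain ⟨l', i', hne, hchain, hall, hlast⟩ :=
          seg_construct f s3 hstep hG c i hfc i1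
        match l', hne with
        | x' :: xs', _ =>
          refine ⟨(x', xs', i'), ⟨?_, ?_, ?_, ?_⟩, ?_, ?_⟩
          · exact hall x' List.mem_cons_self
          · exact List.chain_of_chain_cons hchain
          · intro u hu; exact hall u (List.mem_cons_of_mem _ hu)
          · exact hlast
          · exact List.rel_of_chain_cons hchain
          · intro hcon; exact absurd rfl hcon
      | x :: xs =>
        refine ⟨(x, xs, i), ⟨?_, ?_, ?_, ?_⟩, ?_, ?_⟩
        · exact i3 x List.mem_cons_self
        · exact List.chain_of_chain_cons i2
        · intro u hu; exact i3 u (List.mem_cons_of_mem _ hu)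
        · have := i4
          rwa [List.getLast_cons (List.cons_ne_nil x xs)] at this
        · exact List.rel_of_chain_cons i2
        · intro _; exact ⟨Nat.lt_succ_self _, rfl⟩
    -- build the infinite run
    let St := {p : T.S × List T.S × ℕ // Inv p}
    have hst0 : Inv (m0, ([] : List T.S), 0) := by
      refine ⟨hm0s, List.Chain.nil, by simp, by simpa using hfm0⟩
    let nxt : St → St := fun st =>
      ⟨Classical.choose (hstepSt st.1 st.2), (Classical.choose_spec (hstepSt st.1 st.2)).1⟩
    have hnxt : ∀ st : St, T.TauStep st.1.1 (nxt st).1.1 ∧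
        (st.1.2.1 ≠ [] → (nxt st).1.2.1.length < st.1.2.1.length ∧ (nxt st).1.2.2 = st.1.2.2) :=
      fun st => (Classical.choose_spec (hstepSt st.1 st.2)).2
    let σ : ℕ → St := fun n => Nat.rec ⟨(m0, [], 0), hst0⟩ (fun _ st => nxt st) n
    have hσ : ∀ n, σ (n + 1) = nxt (σ n) := fun n => rfl
    set h : ℕ → T.S := fun n => (σ n).1.1 with hh
    have hrun : ∀ n, T.TauStep (h n) (h (n + 1)) := by
      intro n
      have := (hnxt (σ n)).1
      rwa [← hσ n] at this
    have hEqs3 : ∀ n, SBisimD T T (h n) s3 := fun n => (σ n).2.1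
    have hmark : ∀ n, (σ n).1.2.1 = [] → SBisimD T T (f ((σ n).1.2.2)) (h n) := by
      intro n hl
      have := (σ n).2.2.2.2
      rw [hl] at this
      simpa using this
    have hcof : ∀ L n, (σ n).1.2.1.length ≤ L → ∃ n', n ≤ n' ∧ (σ n').1.2.1 = [] := by
      intro L
      induction L with
      | zero =>
          intro n hn
          exact ⟨n, le_refl n, List.length_eq_zero_iff.mp (Nat.le_zero.mp hn)⟩
      | succ L ih =>
          intro n hn
          by_cases hl : (σ n).1.2.1 = []
          · exact ⟨n, le_refl n, hl⟩
          · have hlt := ((hnxt (σ n)).2 hl).1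
            rw [← hσ n] at hlt
            obtain ⟨n', hn1, hn2⟩ := ih (n + 1) (by omega)
            exact ⟨n', by omega, hn2⟩
    have htauStar : ∀ n k, T.TauStar (h n) (h (n + k)) := by
      intro n k
      induction k with
      | zero => exact Relation.ReflTransGen.refl
      | succ k ih => exact Relation.ReflTransGen.tail ih (hrun (n + k))
    obtain ⟨z, hz, n, hEqz⟩ := eqv_div3 h s3 hrun hEqs3
    obtain ⟨n', hn1, hn2⟩ := hcof ((σ n).1.2.1.length) n (le_refl _)
    obtain ⟨k, rfl⟩ := Nat.exists_eq_add_of_le hn1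
    obtain ⟨z2, hz2, hEqz2⟩ := eqv_tauStar (htauStar n k) z hEqz
    exact hG ⟨z2, Relation.TransGen.trans_left hz hz2, (σ (n + k)).1.2.2, h (n + k),
      hmark (n + k) hn2, hEqz2⟩
  obtain ⟨hbb, hdp⟩ := dpbb_of_symm hsym hc1 hc3
  exact ⟨R, hbb, hdp, y, hxy, hyz⟩

end Aux3

section Aux4

variable {A : Type u} {T : LTS.{u, v} A}

/-- the stuttering lemma for `≈Δ` -/
lemma eqv_stutter {t u w : T.S} (h1 : T.TauStep t u) (h2 : T.TauStar u w)
    (h3 : SBisimD T T t w) : SBisimD T T t u := by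
  rcases tauStar_cases h2 with rfl | hplus
  · exact h3
  set R : T.S → T.S → Prop := fun p v =>
    SBisimD T T p v ∨ (T.TauPlus t p ∧ T.TauPlus p w ∧ SBisimD T T t v) with hRdef
  have hint : ∀ p v, T.TauPlus t p → T.TauPlus p w → SBisimD T T t v → R p v :=
    fun p v a b c => Or.inr ⟨a, b, c⟩
  have hclause1 : ∀ s1 s2, R s1 s2 → ∀ a s1', T.step s1 a s1' →
      ∃ s2'' s2', T.TauStar s2 s2'' ∧ T.OptStep s2'' a s2' ∧ R s1 s2'' ∧ R s1' s2' := by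
    rintro p v (hpv | ⟨hp1, hp2, htv⟩) a p' hstep
    · obtain ⟨v'', v', g1, g2, g3, g4⟩ := eqv_match hpv hstep
      exact ⟨v'', v', g1, g2, Or.inl g3, Or.inl g4⟩
    · obtain ⟨vp, k1, k2⟩ := eqv_tauStar hp1.to_reflTransGen v htv
      obtain ⟨v'', v', g1, g2, g3, g4⟩ := eqv_match k2 hstep
      exact ⟨v'', v', Relation.ReflTransGen.trans k1 g1, g2, Or.inl g3, Or.inl g4⟩
  have hclause2 : ∀ s1 s2, R s1 s2 → ∀ a s2', T.step s2 a s2' →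
      ∃ s1'' s1', T.TauStar s1 s1'' ∧ T.OptStep s1'' a s1' ∧ R s1'' s2 ∧ R s1' s2' := by
    rintro p v (hpv | ⟨hp1, hp2, htv⟩) a v' hstep
    · obtain ⟨p'', p', g1, g2, g3, g4⟩ := eqv_match_rev hpv hstep
      exact ⟨p'', p', g1, g2, Or.inl g3, Or.inl g4⟩
    · have hwv : SBisimD T T w v := eqv_trans (eqv_symm h3) htv
      obtain ⟨w'', w', g1, g2, g3, g4⟩ := eqv_match_rev hwv hstep
      exact ⟨w'', w', Relation.ReflTransGen.trans hp2.to_reflTransGen g1, g2,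
        Or.inl g3, Or.inl g4⟩
  refine eqv_symm ⟨R, fun s1 s2 hr => ⟨hclause1 s1 s2 hr, hclause2 s1 s2 hr⟩, ⟨?_, ?_⟩,
    hint u t (Relation.TransGen.single h1) hplus (eqv_refl t)⟩
  · -- divergence condition (3)
    intro f v hstep hrel
    by_cases hall : ∀ i, SBisimD T T (f i) v
    · obtain ⟨v', g1, i, g2⟩ := eqv_div3 f v hstep hall
      exact ⟨v', g1, i, Or.inl g2⟩
    · push_neg at hall
      obtain ⟨k0, hk0⟩ := hall
      rcases hrel k0 with hS | ⟨hp1, hp2, htv⟩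
      · exact absurd hS hk0
      · obtain ⟨v', g1, g2⟩ := eqv_tauStar hp1.to_reflTransGen v htv
        rcases tauStar_cases g1 with rfl | gplus
        · exact absurd g2 hk0
        · exact ⟨v', gplus, k0, Or.inl g2⟩
  · -- divergence condition (4)
    intro s1 g hstep hrel
    by_cases hall : ∀ i, SBisimD T T s1 (g i)
    · obtain ⟨s1', g1, i, g2⟩ := eqv_dpbb.2.2 s1 g hstep hall
      exact ⟨s1', g1, i, Or.inl g2⟩
    · push_neg at hall
      obtain ⟨k0, hk0⟩ := hall
      rcases hrel k0 with hS | ⟨hp1, hp2, htv⟩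
      · exact absurd hS hk0
      · exact ⟨w, hp2, k0, Or.inl (eqv_trans (eqv_symm h3) htv)⟩

end Aux4

section MainAux

variable {A : Type u} {T : LTS.{u, v} A}

lemma reachable_tau {t u : T.S} (ht : T.Reachable t) (h : T.TauStep t u) : T.Reachable u :=
  Relation.ReflTransGen.tail ht ⟨none, h⟩

lemma eqClassD_eq {s' t' : T.S} (h : SBisimD T T s' t') : eqClassD T s' = eqClassD T t' := by
  ext v
  constructor
  · intro hv; exact eqv_trans (eqv_symm h) hv
  · intro hv; exact eqv_trans h hv

/-- existence of a `τ`-minimal representative in the class of a reachable state -/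
lemma exists_minimal (hd : ¬ HasDivergenceD T) {s : T.S} (hs : T.Reachable s) :
    ∃ t, T.Reachable t ∧ SBisimD T T s t ∧ ∀ u, T.TauStep t u → ¬ SBisimD T T s u := by
  by_contra hA
  push_neg at hA
  classical
  have hstep : ∀ t : {t : T.S // T.Reachable t ∧ SBisimD T T s t},
      ∃ u : {t : T.S // T.Reachable t ∧ SBisimD T T s t}, T.TauStep t.1 u.1 := by
    rintro ⟨t, ht1, ht2⟩
    obtain ⟨u, hu1, hu2⟩ := hA t ht1 ht2
    exact ⟨⟨u, reachable_tau ht1 hu1, hu2⟩, hu1⟩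
  choose nxt hnxt using hstep
  let f : ℕ → {t : T.S // T.Reachable t ∧ SBisimD T T s t} :=
    fun n => Nat.rec ⟨s, hs, eqv_refl s⟩ (fun _ t => nxt t) n
  apply hd
  refine ⟨fun n => (f n).1, fun n => (f n).2.1, fun n => hnxt (f n), fun i j => ?_⟩
  exact eqv_trans (eqv_symm (f i).2.2) ((f j).2.2)

end MainAux

/-! ### STATEMENT 5: a boundedly branching transition system without divergence up to ≈Δ
is boundedly branching up to ≈Δ -/

theorem boundedBranchingUpToD_of_boundedBranching {A : Type u} (T : LTS.{u, v} A)
    (hb : T.BoundedBranching) (hd : ¬ HasDivergenceD T) :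
    BoundedBranchingUpToD T := by
  classical
  obtain ⟨B, hB⟩ := hb
  refine ⟨B, fun s hs => ?_⟩
  obtain ⟨tstar, htr, hts, hmin⟩ := exists_minimal hd hs
  have key : ∀ p : Option A × Set T.S,
      (∃ s'' s', T.TauStar s s'' ∧ T.step s'' p.1 s' ∧ SBisimD T T s s'' ∧
        (p.1 = none → ¬ SBisimD T T s'' s') ∧ p.2 = eqClassD T s') →
      ∃ t', T.step tstar p.1 t' ∧ p.2 = eqClassD T t' := by
    rintro p ⟨s'', s', h1, h2, h3, h4, h5⟩
    have hst : SBisimD T T s'' tstar := eqv_trans (eqv_symm h3) hts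
    obtain ⟨t3, t', g1, g2, g3, g4⟩ := eqv_match hst h2
    have ht3 : t3 = tstar := by
      rcases Relation.ReflTransGen.cases_head g1 with heq | ⟨c, hc1, hc2⟩
      · exact heq.symm
      · exfalso
        have htt3 : SBisimD T T tstar t3 :=
          eqv_trans (eqv_symm hts) (eqv_trans h3 g3)
        have := eqv_stutter hc1 hc2 htt3
        exact hmin c hc1 (eqv_trans hts this)
    subst ht3
    rcases g2 with gstep | ⟨ha, heq⟩
    · exact ⟨t', gstep, h5.trans (eqClassD_eq g4)⟩
    · exfalso
      apply h4 ha
      exact eqv_trans g3 (heq ▸ eqv_symm g4)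
  set D := {p : Option A × Set T.S //
      ∃ s'' s', T.TauStar s s'' ∧ T.step s'' p.1 s' ∧ SBisimD T T s s'' ∧
        (p.1 = none → ¬ SBisimD T T s'' s') ∧ p.2 = eqClassD T s'} with hD
  let F : D → {q : Option A × T.S // T.step tstar q.1 q.2} :=
    fun e => ⟨(e.1.1, Classical.choose (key e.1 e.2)), (Classical.choose_spec (key e.1 e.2)).1⟩
  have hinj : Function.Injective F := by
    intro e1 e2 h
    have h1 : e1.1.1 = e2.1.1 := congrArg (fun q => q.1.1) h
    have h2 : Classical.choose (key e1.1 e1.2) = Classical.choose (key e2.1 e2.2) :=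
      congrArg (fun q => q.1.2) h
    apply Subtype.ext
    apply Prod.ext h1
    rw [(Classical.choose_spec (key e1.1 e1.2)).2, (Classical.choose_spec (key e2.1 e2.2)).2, h2]
  have hle : degD T s ≤ Cardinal.mk {q : Option A × T.S // T.step tstar q.1 q.2} :=
    Cardinal.mk_le_of_injective hinj
  exact hle.trans (hB tstar)
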